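/- Let G* be a 3-graph attaining the maximum 3-spectral radius among all cancellative 3-graphs on n vertices, such that L_{G*}(u) = L_{G*}(v) for every pair of non-adjacent vertices u, v. Let x be a nonnegative vector with ‖x‖_3 = 1 and P_{G*}(x) = λ^(3)(G*), let u_1 be a vertex with x_{u_1} = max_i x_i, and let u_2 be a vertex of maximum x-value among the neighbors of u_1. Then (1) d_{G*}(u_1) > n(n-1)/9, (2) d_{G*}(u_2) > n(n-1)/12, and (3) d_{G*}(v) > n(n-1)/16 for every vertex v. -/

import Mathlib

open Finset

/-- A 3-uniform hypergraph on vertex set `Fin n`, given by its edge set: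
every edge is a 3-element subset. -/
def IsThreeGraph {n : ℕ} (E : Finset (Finset (Fin n))) : Prop :=
  ∀ e ∈ E, e.card = 3

/-- `G` is cancellative: there are no three distinct edges `A, B, C` with `B △ C ⊆ A`. -/
def Cancellative {n : ℕ} (E : Finset (Finset (Fin n))) : Prop :=
  ∀ A ∈ E, ∀ B ∈ E, ∀ C ∈ E, A ≠ B → A ≠ C → B ≠ C → ¬ (symmDiff B C ⊆ A)

/-- The `p`-norm of a vector `x ∈ ℝ^n`. -/
noncomputable def pNorm {n : ℕ} (p : ℝ) (x : Fin n → ℝ) : ℝ :=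
  (∑ i, |x i| ^ p) ^ (1 / p)

/-- The polynomial form of a 3-graph. -/
noncomputable def polyForm {n : ℕ} (E : Finset (Finset (Fin n))) (x : Fin n → ℝ) : ℝ :=
  3 * ∑ e ∈ E, ∏ i ∈ e, x i

/-- The `p`-spectral radius of a 3-graph: the maximum of the polynomial form over the
unit sphere of the `p`-norm. -/
noncomputable def specRad {n : ℕ} (p : ℝ) (E : Finset (Finset (Fin n))) : ℝ :=
  sSup {r : ℝ | ∃ x : Fin n → ℝ, pNorm p x = 1 ∧ polyForm E x = r}

/-- The part (among the three parts of sizes ⌊n/3⌋, ⌊(n+1)/3⌋, ⌊(n+2)/3⌋) containing vertex `i`. -/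
def part3 (n : ℕ) (i : Fin n) : Fin 3 :=
  if (i : ℕ) < n / 3 then 0 else if (i : ℕ) < n / 3 + (n + 1) / 3 then 1 else 2

/-- The complete 3-partite 3-graph `T_3(n)` with part sizes ⌊n/3⌋, ⌊(n+1)/3⌋, ⌊(n+2)/3⌋:
edges are the triples having exactly one vertex in each part. -/
def T3 (n : ℕ) : Finset (Finset (Fin n)) :=
  Finset.univ.filter fun e => ∀ k : Fin 3, (e.filter fun i => part3 n i = k).card = 1

/-- `t_3(n)`, the number of edges of `T_3(n)`. -/
def t3 (n : ℕ) : ℕ := (n / 3) * ((n + 1) / 3) * ((n + 2) / 3)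

/-- Two 3-graphs on `Fin n` are isomorphic. -/
def IsoTo {n : ℕ} (E₁ E₂ : Finset (Finset (Fin n))) : Prop :=
  ∃ σ : Fin n ≃ Fin n, ∀ e : Finset (Fin n), e ∈ E₁ ↔ e.map σ.toEmbedding ∈ E₂

/-- Two vertices are adjacent if some edge contains both. -/
def Adjacent {n : ℕ} (E : Finset (Finset (Fin n))) (u v : Fin n) : Prop :=
  u ≠ v ∧ ∃ e ∈ E, u ∈ e ∧ v ∈ e

/-- The link of a vertex `v`: all 2-element sets `S` with `S ∪ {v} ∈ E`. -/
def link {n : ℕ} (E : Finset (Finset (Fin n))) (v : Fin n) : Finset (Finset (Fin n)) :=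
  (E.filter fun e => v ∈ e).image fun e => e.erase v

/-- The degree of a vertex: the size of its link. -/
def degree {n : ℕ} (E : Finset (Finset (Fin n))) (v : Fin n) : ℕ := (link E v).card

/-- The transfer `T_v^u(G)`: delete all edges containing `v` and replace `v` for `u`
in all edges containing `u` but not `v`. -/
def transfer {n : ℕ} (E : Finset (Finset (Fin n))) (u v : Fin n) : Finset (Finset (Fin n)) :=
  (E.filter fun e => v ∉ e) ∪
    ((E.filter fun e => u ∈ e ∧ v ∉ e).image fun e => insert v (e.erase u))

/-- A 3-graph is complete 3-partite: there is a partition of the vertices into three classes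
such that the edges are exactly the triples with one vertex in each class. -/
def IsComplete3Partite {n : ℕ} (E : Finset (Finset (Fin n))) : Prop :=
  ∃ P : Fin n → Fin 3,
    ∀ e : Finset (Fin n), e ∈ E ↔ ∀ k : Fin 3, (e.filter fun i => P i = k).card = 1

/-- `G` has maximum `p`-spectral radius among all cancellative 3-graphs on `n` vertices. -/
def MaxSpectral {n : ℕ} (p : ℝ) (E : Finset (Finset (Fin n))) : Prop :=
  IsThreeGraph E ∧ Cancellative E ∧
    ∀ E' : Finset (Finset (Fin n)), IsThreeGraph E' → Cancellative E' →
      specRad p E' ≤ specRad p E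







section Aux
variable {n : ℕ}

lemma abs_rpow_three {t : ℝ} (ht : 0 ≤ t) : |t| ^ (3:ℝ) = t ^ 3 := by
  rw [abs_of_nonneg ht, ← Real.rpow_natCast t 3]; norm_num

lemma sum_abs_rpow_eq_one {x : Fin n → ℝ} (h : pNorm 3 x = 1) :
    ∑ i, |x i| ^ (3:ℝ) = 1 := by
  have h0 : (0:ℝ) ≤ ∑ i, |x i| ^ (3:ℝ) :=
    Finset.sum_nonneg fun i _ => Real.rpow_nonneg (abs_nonneg _) _
  have h2 := congrArg (fun t : ℝ => t ^ (3:ℝ)) h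
  simp only [pNorm] at h2
  rwa [← Real.rpow_mul h0, one_div, inv_mul_cancel₀ (by norm_num : (3:ℝ) ≠ 0),
    Real.rpow_one, Real.one_rpow] at h2

lemma sum_cube_eq_one {x : Fin n → ℝ} (hx0 : ∀ i, 0 ≤ x i) (h : pNorm 3 x = 1) :
    ∑ i, (x i) ^ 3 = 1 := by
  have h1 := sum_abs_rpow_eq_one h
  rw [← h1]
  exact Finset.sum_congr rfl fun i _ => (abs_rpow_three (hx0 i)).symm

lemma pNorm_eq_one_of {x : Fin n → ℝ} (h : ∑ i, |x i| ^ (3:ℝ) = 1) : pNorm 3 x = 1 := by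
  rw [pNorm, h, Real.one_rpow]

lemma bddAbove_poly (E : Finset (Finset (Fin n))) :
    BddAbove {r : ℝ | ∃ z : Fin n → ℝ, pNorm 3 z = 1 ∧ polyForm E z = r} := by
  refine ⟨3 * E.card, ?_⟩
  rintro r ⟨z, hz, rfl⟩
  have h1 := sum_abs_rpow_eq_one hz
  have hle : ∀ i, |z i| ≤ 1 := by
    intro i
    have hterm : |z i| ^ (3:ℝ) ≤ 1 := by
      rw [← h1]
      exact Finset.single_le_sum (fun j _ => Real.rpow_nonneg (abs_nonneg _) _) (mem_univ i)
    by_contra hgt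
    push_neg at hgt
    have : (1:ℝ) < |z i| ^ (3:ℝ) := by
      calc (1:ℝ) = 1 ^ (3:ℝ) := by rw [Real.one_rpow]
      _ < |z i| ^ (3:ℝ) := Real.rpow_lt_rpow (by norm_num) hgt (by norm_num)
    linarith
  rw [polyForm]
  have hsum : ∑ e ∈ E, ∏ i ∈ e, z i ≤ (E.card : ℝ) := by
    calc ∑ e ∈ E, ∏ i ∈ e, z i ≤ ∑ e ∈ E, (1:ℝ) := by
          refine Finset.sum_le_sum fun e _ => ?_
          calc ∏ i ∈ e, z i ≤ |∏ i ∈ e, z i| := le_abs_self _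
            _ = ∏ i ∈ e, |z i| := by rw [Finset.abs_prod]
            _ ≤ ∏ i ∈ e, (1:ℝ) :=
                Finset.prod_le_prod (fun i _ => abs_nonneg _) (fun i _ => hle i)
            _ = 1 := by simp
      _ = (E.card : ℝ) := by simp
  linarith

lemma le_specRad (E : Finset (Finset (Fin n))) {z : Fin n → ℝ} (hz : pNorm 3 z = 1) :
    polyForm E z ≤ specRad 3 E :=
  le_csSup (bddAbove_poly E) ⟨z, hz, rfl⟩

lemma polyForm_smul {E : Finset (Finset (Fin n))} (hE : IsThreeGraph E) (s : ℝ)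
    (z : Fin n → ℝ) : polyForm E (fun i => s * z i) = s ^ 3 * polyForm E z := by
  simp only [polyForm]
  rw [Finset.mul_sum, Finset.mul_sum]
  ring_nf
  rw [Finset.mul_sum]
  refine Finset.sum_congr rfl fun e he => ?_
  rw [Finset.prod_mul_distrib, Finset.prod_const, hE e he]
  ring

lemma polyForm_le_spec {E : Finset (Finset (Fin n))} (hE : IsThreeGraph E)
    (y : Fin n → ℝ) (hy : ∀ i, 0 ≤ y i) :
    polyForm E y ≤ specRad 3 E * (∑ i, (y i) ^ 3) := by
  set m := ∑ i, (y i) ^ 3 with hm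
  have hm0 : 0 ≤ m := Finset.sum_nonneg fun i _ => pow_nonneg (hy i) 3
  rcases eq_or_lt_of_le hm0 with h0 | hpos
  · have hy0 : ∀ i, y i = 0 := by
      intro i
      have h3 : (y i) ^ 3 = 0 :=
        (Finset.sum_eq_zero_iff_of_nonneg (fun j _ => pow_nonneg (hy j) 3)).mp h0.symm i
          (mem_univ i)
      exact pow_eq_zero_iff (by norm_num) |>.mp h3
    have hp0 : polyForm E y = 0 := by
      rw [polyForm]
      have hz : ∀ e ∈ E, ∏ i ∈ e, y i = 0 := by
        intro e he
        have hcard := hE e he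
        obtain ⟨i, hi⟩ := Finset.card_pos.mp (by omega : 0 < e.card)
        exact Finset.prod_eq_zero hi (hy0 i)
      rw [Finset.sum_congr rfl hz]; simp
    rw [hp0, ← h0]; simp
  · set s := (m⁻¹) ^ ((1:ℝ)/3) with hs
    have hs0 : 0 < s := Real.rpow_pos_of_pos (inv_pos.mpr hpos) _
    have hs3 : s ^ 3 = m⁻¹ := by
      rw [hs, ← Real.rpow_natCast ((m⁻¹) ^ ((1:ℝ)/3)) 3, ← Real.rpow_mul (le_of_lt (inv_pos.mpr hpos))]
      norm_num
    have hz : pNorm 3 (fun i => s * y i) = 1 := by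
      apply pNorm_eq_one_of
      have : ∀ i, |s * y i| ^ (3:ℝ) = s ^ 3 * (y i) ^ 3 := by
        intro i
        rw [abs_rpow_three (mul_nonneg hs0.le (hy i)), mul_pow]
      rw [Finset.sum_congr rfl fun i _ => this i, ← Finset.mul_sum, hs3, ← hm,
        inv_mul_cancel₀ (ne_of_gt hpos)]
    have hle := le_specRad E hz
    rw [polyForm_smul hE s y, hs3] at hle
    have := mul_le_mul_of_nonneg_right hle hm0
    rw [inv_mul_eq_div, div_mul_cancel₀] at this
    · linarith [this]
    · exact ne_of_gt hpos
end Aux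


section Eigen
variable {n : ℕ}

/-- splitting the polynomial form at a vertex -/
lemma poly_split (E : Finset (Finset (Fin n))) (v : Fin n) (y : Fin n → ℝ) :
    ∑ e ∈ E, ∏ i ∈ e, y i
      = (∑ e ∈ E.filter (fun e => v ∉ e), ∏ i ∈ e, y i)
        + y v * ∑ e ∈ E.filter (fun e => v ∈ e), ∏ i ∈ e.erase v, y i := by
  rw [Finset.mul_sum]
  rw [← Finset.sum_filter_add_sum_filter_not E (fun e => v ∉ e)]
  congr 1
  refine Finset.sum_congr (by simp) fun e he => ?_
  have hv : v ∈ e := by simpa using (Finset.mem_filter.mp he).2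
  exact (Finset.mul_prod_erase e y hv).symm

lemma eigen_eq {E : Finset (Finset (Fin n))} (hE : IsThreeGraph E)
    {x : Fin n → ℝ} (hx0 : ∀ i, 0 ≤ x i) (hxn : pNorm 3 x = 1)
    (hopt : ∀ z : Fin n → ℝ, pNorm 3 z = 1 → polyForm E z ≤ polyForm E x)
    {v : Fin n} (h0 : 0 < x v) (h1 : x v < 1) :
    ∑ e ∈ E.filter (fun e => v ∈ e), ∏ i ∈ e.erase v, x i
      = polyForm E x * (x v) ^ 2 := by
  have hsum := sum_cube_eq_one hx0 hxn
  set W : ℝ := ∑ e ∈ E.filter (fun e => v ∈ e), ∏ i ∈ e.erase v, x i with hW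
  set S₀ : ℝ := ∑ e ∈ E.filter (fun e => v ∉ e), ∏ i ∈ e, x i with hS₀
  have hlam : polyForm E x = 3 * S₀ + 3 * x v * W := by
    rw [polyForm, poly_split E v x]; ring
  set c : ℝ := 1 - (x v) ^ 3 with hc
  have hxv3 : (x v) ^ 3 < 1 := by
    have := pow_lt_one₀ (le_of_lt h0) h1 (by norm_num : 3 ≠ 0)
    exact this
  have hcpos : 0 < c := by rw [hc]; linarith
  have hsumv : ∑ i ∈ Finset.univ.erase v, (x i) ^ 3 = c := by
    have h2 : (∑ i ∈ Finset.univ.erase v, (x i) ^ 3) + (x v) ^ 3 = 1 := by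
      simpa using (Finset.sum_erase_add Finset.univ (fun i => (x i) ^ 3) (mem_univ v)).trans hsum
    rw [hc]; linarith
  -- the perturbed vector
  set t : ℝ → ℝ := fun a => (1 - a ^ 3) / c with ht
  set β : ℝ → ℝ := fun a => (t a) ^ ((1:ℝ)/3) with hβ
  set y : ℝ → Fin n → ℝ := fun a i => if i = v then a else β a * x i with hy
  set g : ℝ → ℝ := fun a => 3 * W * (a * (t a) ^ ((2:ℝ)/3)) + 3 * S₀ * (t a) with hg
  have ht0 : ∀ a ∈ Set.Ioo (0:ℝ) 1, 0 ≤ t a := by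
    intro a ha
    have : a ^ 3 ≤ 1 := pow_le_one₀ ha.1.le ha.2.le
    have : 0 ≤ 1 - a ^ 3 := by linarith
    exact div_nonneg this hcpos.le
  have hβ0 : ∀ a ∈ Set.Ioo (0:ℝ) 1, 0 ≤ β a := fun a ha =>
    Real.rpow_nonneg (ht0 a ha) _
  have hβ3 : ∀ a ∈ Set.Ioo (0:ℝ) 1, (β a) ^ 3 = t a := by
    intro a ha
    rw [hβ, ← Real.rpow_natCast ((t a) ^ ((1:ℝ)/3)) 3, ← Real.rpow_mul (ht0 a ha)]
    norm_num
  have hβ2 : ∀ a ∈ Set.Ioo (0:ℝ) 1, (β a) ^ 2 = (t a) ^ ((2:ℝ)/3) := by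
    intro a ha
    rw [hβ, ← Real.rpow_natCast ((t a) ^ ((1:ℝ)/3)) 2, ← Real.rpow_mul (ht0 a ha)]
    norm_num
  have hnorm : ∀ a ∈ Set.Ioo (0:ℝ) 1, pNorm 3 (y a) = 1 := by
    intro a ha
    apply pNorm_eq_one_of
    rw [← Finset.sum_erase_add Finset.univ _ (mem_univ v)]
    have h1' : ∀ i ∈ Finset.univ.erase v, |y a i| ^ (3:ℝ) = t a * (x i) ^ 3 := by
      intro i hi
      have hiv : i ≠ v := Finset.ne_of_mem_erase hi
      have : y a i = β a * x i := by rw [hy]; simp [hiv]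
      rw [this, abs_rpow_three (mul_nonneg (hβ0 a ha) (hx0 i)), mul_pow, hβ3 a ha]
    rw [Finset.sum_congr rfl h1', ← Finset.mul_sum, hsumv]
    have hyv : y a v = a := by rw [hy]; simp
    rw [hyv, abs_rpow_three ha.1.le, ht]
    field_simp
    ring
  have hval : ∀ a ∈ Set.Ioo (0:ℝ) 1, polyForm E (y a) = g a := by
    intro a ha
    rw [polyForm, poly_split E v (y a)]
    have hyv : y a v = a := by rw [hy]; simp
    have hA : ∑ e ∈ E.filter (fun e => v ∉ e), ∏ i ∈ e, y a i = t a * S₀ := by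
      rw [hS₀, Finset.mul_sum]
      refine Finset.sum_congr rfl fun e he => ?_
      obtain ⟨heE, hve⟩ := Finset.mem_filter.mp he
      have : ∀ i ∈ e, y a i = β a * x i := by
        intro i hi
        have : i ≠ v := fun h => hve (h ▸ hi)
        rw [hy]; simp [this]
      rw [Finset.prod_congr rfl this, Finset.prod_mul_distrib, Finset.prod_const,
        hE e heE, hβ3 a ha]
    have hB : ∑ e ∈ E.filter (fun e => v ∈ e), ∏ i ∈ e.erase v, y a i
        = (t a) ^ ((2:ℝ)/3) * W := by
      rw [hW, Finset.mul_sum]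
      refine Finset.sum_congr rfl fun e he => ?_
      obtain ⟨heE, hve⟩ := Finset.mem_filter.mp he
      have hcard : (e.erase v).card = 2 := by
        rw [Finset.card_erase_of_mem hve, hE e heE]
      have : ∀ i ∈ e.erase v, y a i = β a * x i := by
        intro i hi
        have : i ≠ v := Finset.ne_of_mem_erase hi
        rw [hy]; simp [this]
      rw [Finset.prod_congr rfl this, Finset.prod_mul_distrib, Finset.prod_const,
        hcard, hβ2 a ha]
    rw [hA, hB, hyv, hg]; ring
  have hxvmem : x v ∈ Set.Ioo (0:ℝ) 1 := ⟨h0, h1⟩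
  have htx : t (x v) = 1 := by rw [ht]; simp only; rw [← hc]; exact div_self hcpos.ne'
  have hgx : g (x v) = polyForm E x := by
    rw [hg]; simp only; rw [htx, Real.one_rpow, hlam]; ring
  have hloc : IsLocalMax g (x v) := by
    have hmem : Set.Ioo (0:ℝ) 1 ∈ nhds (x v) := isOpen_Ioo.mem_nhds hxvmem
    filter_upwards [hmem] with a ha
    rw [hgx, ← hval a ha]
    exact hopt (y a) (hnorm a ha)
  -- derivative
  have hu : HasDerivAt (fun a : ℝ => (1 - a ^ 3) / c) (-(3 * (x v) ^ 2) / c) (x v) := by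
    have h := ((hasDerivAt_pow 3 (x v)).const_sub 1).div_const c
    rw [show -(3 * (x v) ^ 2) = -(((3:ℕ):ℝ) * (x v) ^ (3 - 1)) by norm_num]
    exact h
  have hrp : HasDerivAt (fun a : ℝ => ((1 - a ^ 3) / c) ^ ((2:ℝ)/3))
      ((-(3 * (x v) ^ 2) / c) * ((2:ℝ)/3) * (((1 - (x v) ^ 3) / c) ^ ((2:ℝ)/3 - 1)))
      (x v) := by
    apply hu.rpow_const
    left
    rw [← hc, div_self hcpos.ne']
    norm_num
  have hprod : HasDerivAt (fun a : ℝ => a * ((1 - a ^ 3) / c) ^ ((2:ℝ)/3))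
      (1 * (((1 - (x v) ^ 3) / c) ^ ((2:ℝ)/3))
        + x v * ((-(3 * (x v) ^ 2) / c) * ((2:ℝ)/3) * (((1 - (x v) ^ 3) / c) ^ ((2:ℝ)/3 - 1))))
      (x v) := (hasDerivAt_id (x v)).mul hrp
  have hgderiv : HasDerivAt g
      (3 * W * (1 * (((1 - (x v) ^ 3) / c) ^ ((2:ℝ)/3))
        + x v * ((-(3 * (x v) ^ 2) / c) * ((2:ℝ)/3) * (((1 - (x v) ^ 3) / c) ^ ((2:ℝ)/3 - 1))))
        + 3 * S₀ * (-(3 * (x v) ^ 2) / c)) (x v) := by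
    exact (hprod.const_mul (3 * W)).add (hu.const_mul (3 * S₀))
  have hD0 := hloc.hasDerivAt_eq_zero hgderiv
  have hone : ((1 - (x v) ^ 3) / c) = 1 := by rw [← hc]; exact div_self hcpos.ne'
  rw [hone, Real.one_rpow, Real.one_rpow] at hD0
  rw [hlam]
  have hcne : c ≠ 0 := hcpos.ne'
  field_simp at hD0
  simp only [hc] at hD0
  have key : (1 - (x v) ^ 3) * (W - (3 * S₀ + 3 * x v * W) * (x v) ^ 2) = 0 := by
    linear_combination (1 - (x v) ^ 3) / 3 * hD0
  rcases mul_eq_zero.mp key with h | h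
  · exfalso; rw [hc] at hcpos; linarith
  · linarith
end Eigen


section T3sec
variable {n : ℕ}

lemma mem_T3 {e : Finset (Fin n)} :
    e ∈ T3 n ↔ ∀ k : Fin 3, (e.filter fun i => part3 n i = k).card = 1 := by
  simp [T3]

lemma T3_threeGraph : IsThreeGraph (T3 n) := by
  intro e he
  have hk := mem_T3.mp he
  have := Finset.card_eq_sum_card_fiberwise (f := part3 n) (s := e) (t := Finset.univ)
    (fun x _ => mem_univ _)
  rw [this, Fin.sum_univ_three, hk 0, hk 1, hk 2]

/-- injectivity of `part3` on an edge of `T3` -/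
lemma part3_inj {e : Finset (Fin n)} (he : e ∈ T3 n) :
    ∀ a ∈ e, ∀ b ∈ e, part3 n a = part3 n b → a = b := by
  intro a ha b hb hab
  have h1 := mem_T3.mp he (part3 n a)
  refine Finset.card_le_one.mp (le_of_eq h1) a ?_ b ?_ <;>
    simp [Finset.mem_filter, ha, hb, hab]

lemma T3_cancellative : Cancellative (T3 n) := by
  intro A hA B hB C hC hAB hAC hBC h
  have cA := T3_threeGraph A hA
  have cB := T3_threeGraph B hB
  have cC := T3_threeGraph C hC
  -- pick p ∈ B \ C, q ∈ C \ B
  have hnBC : ¬ B ⊆ C := fun hsub => hBC (Finset.eq_of_subset_of_card_le hsub (by omega))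
  have hnCB : ¬ C ⊆ B := fun hsub => hBC (Finset.eq_of_subset_of_card_le hsub (by omega)).symm
  obtain ⟨p, hpB, hpC⟩ := Finset.not_subset.mp hnBC
  obtain ⟨q, hqC, hqB⟩ := Finset.not_subset.mp hnCB
  -- |B ∩ C| = 2
  have hsd : symmDiff B C = (B \ C) ∪ (C \ B) := by rw [symmDiff_def]; rfl
  have hdisj : Disjoint (B \ C) (C \ B) :=
    Finset.disjoint_left.mpr (fun a haB haC => (Finset.mem_sdiff.mp haC).2 (Finset.mem_sdiff.mp haB).1)
  have hcard_sd : (symmDiff B C).card = (B \ C).card + (C \ B).card := by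
    rw [hsd, Finset.card_union_of_disjoint hdisj]
  have h1 : (B \ C).card + (B ∩ C).card = 3 := by rw [Finset.card_sdiff_add_card_inter, cB]
  have h2 : (C \ B).card + (C ∩ B).card = 3 := by rw [Finset.card_sdiff_add_card_inter, cC]
  have hic : (B ∩ C).card = (C ∩ B).card := by rw [Finset.inter_comm]
  have hle : (symmDiff B C).card ≤ 3 := cA ▸ Finset.card_le_card h
  have hi2 : (B ∩ C).card = 2 := by
    have hi3 : (B ∩ C).card ≠ 3 := by
      intro h3
      have : B ∩ C = B := Finset.eq_of_subset_of_card_le (Finset.inter_subset_left) (by omega)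
      have hBsub : B ⊆ C := by rw [← this]; exact Finset.inter_subset_right
      exact hnBC hBsub
    have : (B ∩ C).card ≤ 3 := le_trans (Finset.card_le_card Finset.inter_subset_left) (le_of_eq cB)
    omega
  obtain ⟨a, b, hab, habe⟩ := Finset.card_eq_two.mp hi2
  have haB : a ∈ B := (Finset.mem_inter.mp (habe ▸ Finset.mem_insert_self a {b})).1
  have haC : a ∈ C := (Finset.mem_inter.mp (habe ▸ Finset.mem_insert_self a {b})).2
  have hbBC : b ∈ B ∩ C := habe ▸ Finset.mem_insert_of_mem (Finset.mem_singleton_self b)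
  have hbB : b ∈ B := (Finset.mem_inter.mp hbBC).1
  have hbC : b ∈ C := (Finset.mem_inter.mp hbBC).2
  -- parts
  have hpa : part3 n a ≠ part3 n b := fun hh => hab (part3_inj hB a haB b hbB hh)
  have hppa : part3 n p ≠ part3 n a := fun hh => hpC (part3_inj hB p hpB a haB hh ▸ haC)
  have hppb : part3 n p ≠ part3 n b := fun hh => hpC (part3_inj hB p hpB b hbB hh ▸ hbC)
  have hqqa : part3 n q ≠ part3 n a := fun hh => hqB (part3_inj hC q hqC a haC hh ▸ haB)
  have hqqb : part3 n q ≠ part3 n b := fun hh => hqB (part3_inj hC q hqC b hbC hh ▸ hbB)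
  have hpq : part3 n p = part3 n q := by
    have v1 : (part3 n p).val < 3 := (part3 n p).isLt
    have v2 : (part3 n q).val < 3 := (part3 n q).isLt
    have v3 : (part3 n a).val < 3 := (part3 n a).isLt
    have v4 : (part3 n b).val < 3 := (part3 n b).isLt
    have n1 : (part3 n p).val ≠ (part3 n a).val := fun hh => hppa (Fin.ext hh)
    have n2 : (part3 n p).val ≠ (part3 n b).val := fun hh => hppb (Fin.ext hh)
    have n3 : (part3 n q).val ≠ (part3 n a).val := fun hh => hqqa (Fin.ext hh)
    have n4 : (part3 n q).val ≠ (part3 n b).val := fun hh => hqqb (Fin.ext hh)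
    have n5 : (part3 n a).val ≠ (part3 n b).val := fun hh => hpa (Fin.ext hh)
    exact Fin.ext (by omega)
  -- p, q ∈ A, p ≠ q, same part: contradiction with card 1
  have hpA : p ∈ A := h (by rw [hsd]; exact Finset.mem_union_left _ (Finset.mem_sdiff.mpr ⟨hpB, hpC⟩))
  have hqA : q ∈ A := h (by rw [hsd]; exact Finset.mem_union_right _ (Finset.mem_sdiff.mpr ⟨hqC, hqB⟩))
  have hpqne : p ≠ q := fun hh => hqB (hh ▸ hpB)
  exact hpqne (part3_inj hA p hpA q hqA hpq)
end T3sec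

section T3card
variable {n : ℕ}

lemma filter_triple_card {P : Fin n → Fin 3} {a b c : Fin n}
    (ha : P a = 0) (hb : P b = 1) (hc : P c = 2) (k : Fin 3) :
    ((({a, b, c} : Finset (Fin n))).filter (fun i => P i = k)).card = 1 := by
  have hab : a ≠ b := fun h => by rw [h, hb] at ha; exact absurd ha (by decide)
  have hac : a ≠ c := fun h => by rw [h, hc] at ha; exact absurd ha (by decide)
  have hbc : b ≠ c := fun h => by rw [h, hc] at hb; exact absurd hb (by decide)
  fin_cases k <;>
    simp [Finset.filter_insert, Finset.filter_singleton, ha, hb, hc,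
      hab, hac, hbc]

lemma t3_le_card_T3 (hn : 3 ≤ n) : t3 n ≤ (T3 n).card := by
  have hsum : n / 3 + (n + 1) / 3 + (n + 2) / 3 = n := by omega
  have hnpos : 0 < n := by omega
  set S : Finset (ℕ × ℕ × ℕ) :=
    (Finset.range (n / 3)) ×ˢ (Finset.range ((n + 1) / 3)) ×ˢ (Finset.range ((n + 2) / 3))
    with hS
  have hcardS : S.card = t3 n := by
    rw [hS, Finset.card_product, Finset.card_product]
    simp [t3, Finset.card_range, mul_assoc]
  set F : ℕ × ℕ × ℕ → Finset (Fin n) := fun p =>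
    {⟨p.1 % n, Nat.mod_lt _ hnpos⟩, ⟨(n / 3 + p.2.1) % n, Nat.mod_lt _ hnpos⟩,
      ⟨(n / 3 + (n + 1) / 3 + p.2.2) % n, Nat.mod_lt _ hnpos⟩} with hF
  have hbounds : ∀ p ∈ S, p.1 < n / 3 ∧ p.2.1 < (n + 1) / 3 ∧ p.2.2 < (n + 2) / 3 := by
    intro p hp
    rw [hS] at hp
    simp only [Finset.mem_product, Finset.mem_range] at hp
    exact ⟨hp.1, hp.2.1, hp.2.2⟩
  have hparts : ∀ p ∈ S,
      part3 n (⟨p.1 % n, Nat.mod_lt _ hnpos⟩ : Fin n) = 0 ∧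
      part3 n (⟨(n / 3 + p.2.1) % n, Nat.mod_lt _ hnpos⟩ : Fin n) = 1 ∧
      part3 n (⟨(n / 3 + (n + 1) / 3 + p.2.2) % n, Nat.mod_lt _ hnpos⟩ : Fin n) = 2 := by
    intro p hp
    obtain ⟨h1, h2, h3⟩ := hbounds p hp
    have m1 : p.1 % n = p.1 := Nat.mod_eq_of_lt (by omega)
    have m2 : (n / 3 + p.2.1) % n = n / 3 + p.2.1 := Nat.mod_eq_of_lt (by omega)
    have m3 : (n / 3 + (n + 1) / 3 + p.2.2) % n = n / 3 + (n + 1) / 3 + p.2.2 :=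
      Nat.mod_eq_of_lt (by omega)
    refine ⟨?_, ?_, ?_⟩ <;> simp only [part3, m1, m2, m3]
    · rw [if_pos (by omega)]
    · rw [if_neg (by omega), if_pos (by omega)]
    · rw [if_neg (by omega), if_neg (by omega)]
  have hmaps : ∀ p ∈ S, F p ∈ T3 n := by
    intro p hp
    obtain ⟨q1, q2, q3⟩ := hparts p hp
    rw [mem_T3]
    intro k
    exact filter_triple_card q1 q2 q3 k
  have hinj : ∀ p ∈ S, ∀ q ∈ S, F p = F q → p = q := by
    intro p hp q hq hFeq
    obtain ⟨hp1, hp2, hp3⟩ := hbounds p hp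
    obtain ⟨hq1, hq2, hq3⟩ := hbounds q hq
    have m1 : p.1 % n = p.1 := Nat.mod_eq_of_lt (by omega)
    have m2 : (n / 3 + p.2.1) % n = n / 3 + p.2.1 := Nat.mod_eq_of_lt (by omega)
    have m3 : (n / 3 + (n + 1) / 3 + p.2.2) % n = n / 3 + (n + 1) / 3 + p.2.2 :=
      Nat.mod_eq_of_lt (by omega)
    have m1' : q.1 % n = q.1 := Nat.mod_eq_of_lt (by omega)
    have m2' : (n / 3 + q.2.1) % n = n / 3 + q.2.1 := Nat.mod_eq_of_lt (by omega)
    have m3' : (n / 3 + (n + 1) / 3 + q.2.2) % n = n / 3 + (n + 1) / 3 + q.2.2 :=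
      Nat.mod_eq_of_lt (by omega)
    have hmem : (⟨p.1 % n, Nat.mod_lt _ hnpos⟩ : Fin n) ∈ F q := by
      rw [← hFeq, hF]; exact Finset.mem_insert_self _ _
    have hmem2 : (⟨(n / 3 + p.2.1) % n, Nat.mod_lt _ hnpos⟩ : Fin n) ∈ F q := by
      rw [← hFeq, hF]
      exact Finset.mem_insert_of_mem (Finset.mem_insert_self _ _)
    have hmem3 : (⟨(n / 3 + (n + 1) / 3 + p.2.2) % n, Nat.mod_lt _ hnpos⟩ : Fin n) ∈ F q := by
      rw [← hFeq, hF]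
      exact Finset.mem_insert_of_mem (Finset.mem_insert_of_mem (Finset.mem_singleton_self _))
    rw [hF] at hmem hmem2 hmem3
    simp only [Finset.mem_insert, Finset.mem_singleton, Fin.mk.injEq] at hmem hmem2 hmem3
    have e1 : p.1 = q.1 := by omega
    have e2 : p.2.1 = q.2.1 := by omega
    have e3 : p.2.2 = q.2.2 := by omega
    exact Prod.ext e1 (Prod.ext e2 e3)
  calc t3 n = S.card := hcardS.symm
    _ ≤ (T3 n).card := Finset.card_le_card_of_injOn F hmaps hinj

lemma t3_lower (hn : 3 ≤ n) : (n : ℝ) * (n : ℝ) * ((n : ℝ) - 1) < 27 * (t3 n : ℝ) := by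
  set m := n / 3 with hm
  have hr : n % 3 = 0 ∨ n % 3 = 1 ∨ n % 3 = 2 := by omega
  have hm1 : 1 ≤ m := by omega
  have hm1' : (1:ℝ) ≤ (m:ℝ) := by exact_mod_cast hm1
  rcases hr with h | h | h
  · have hn3 : n = 3 * m := by omega
    have d2 : (n + 1) / 3 = m := by omega
    have d3 : (n + 2) / 3 = m := by omega
    have ht : t3 n = m * m * m := by rw [t3, ← hm, d2, d3]
    rw [ht, hn3]
    push_cast
    nlinarith [hm1']
  · have hn3 : n = 3 * m + 1 := by omega
    have d2 : (n + 1) / 3 = m := by omega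
    have d3 : (n + 2) / 3 = m + 1 := by omega
    have ht : t3 n = m * m * (m + 1) := by rw [t3, ← hm, d2, d3]
    rw [ht, hn3]
    push_cast
    nlinarith [hm1']
  · have hn3 : n = 3 * m + 2 := by omega
    have d2 : (n + 1) / 3 = m + 1 := by omega
    have d3 : (n + 2) / 3 = m + 1 := by omega
    have ht : t3 n = m * (m + 1) * (m + 1) := by rw [t3, ← hm, d2, d3]
    rw [ht, hn3]
    push_cast
    nlinarith [hm1']

lemma T3_specRad_lower (hn : 3 ≤ n) : (n : ℝ) * ((n : ℝ) - 1) / 9 < specRad 3 (T3 n) := by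
  have hnpos : (0:ℝ) < n := by exact_mod_cast (by omega : 0 < n)
  set z : Fin n → ℝ := fun _ => ((n : ℝ)⁻¹) ^ ((1:ℝ)/3) with hzdef
  have hz0 : 0 ≤ ((n : ℝ)⁻¹) ^ ((1:ℝ)/3) := Real.rpow_nonneg (by positivity) _
  have hz3 : (((n : ℝ)⁻¹) ^ ((1:ℝ)/3)) ^ 3 = (n : ℝ)⁻¹ := by
    rw [← Real.rpow_natCast (((n : ℝ)⁻¹) ^ ((1:ℝ)/3)) 3, ← Real.rpow_mul (by positivity)]
    norm_num
  have hznorm : pNorm 3 z = 1 := by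
    apply pNorm_eq_one_of
    have : ∀ i : Fin n, |z i| ^ (3:ℝ) = (n : ℝ)⁻¹ := by
      intro i
      rw [hzdef]
      rw [abs_rpow_three hz0, hz3]
    rw [Finset.sum_congr rfl fun i _ => this i, Finset.sum_const, Finset.card_univ,
      Fintype.card_fin, nsmul_eq_mul, mul_inv_cancel₀ hnpos.ne']
  have hpoly : polyForm (T3 n) z = 3 * (T3 n).card * (n : ℝ)⁻¹ := by
    rw [polyForm]
    have he : ∀ e ∈ T3 n, ∏ i ∈ e, z i = (n : ℝ)⁻¹ := by
      intro e he
      rw [Finset.prod_congr rfl (fun i _ => rfl : ∀ i ∈ e, z i = ((n : ℝ)⁻¹) ^ ((1:ℝ)/3)),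
        Finset.prod_const, T3_threeGraph e he, hz3]
    rw [Finset.sum_congr rfl he, Finset.sum_const, nsmul_eq_mul]
    ring
  have hchain : (n : ℝ) * ((n : ℝ) - 1) / 9 < 3 * (T3 n).card * (n : ℝ)⁻¹ := by
    have h1 := t3_lower hn
    have h2 : (t3 n : ℝ) ≤ ((T3 n).card : ℝ) := by exact_mod_cast t3_le_card_T3 hn
    rw [div_lt_iff₀ (by norm_num : (0:ℝ) < 9)]
    rw [mul_comm (3 * ((T3 n).card : ℝ)) ((n:ℝ)⁻¹)] at *
    have : (n : ℝ) * ((n : ℝ) - 1) * (n : ℝ) < 27 * ((T3 n).card : ℝ) := by nlinarith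
    calc (n : ℝ) * ((n : ℝ) - 1) = ((n : ℝ) * ((n : ℝ) - 1) * (n : ℝ)) * (n:ℝ)⁻¹ := by
          field_simp
      _ < (27 * ((T3 n).card : ℝ)) * (n:ℝ)⁻¹ := by
          apply mul_lt_mul_of_pos_right this (by positivity)
      _ = (n:ℝ)⁻¹ * (3 * ((T3 n).card:ℝ)) * 9 := by ring
  calc (n : ℝ) * ((n : ℝ) - 1) / 9 < 3 * (T3 n).card * (n : ℝ)⁻¹ := hchain
    _ = polyForm (T3 n) z := hpoly.symm
    _ ≤ specRad 3 (T3 n) := le_specRad _ hznorm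


section Transfer
variable {n : ℕ}

lemma mem_transfer {E : Finset (Finset (Fin n))} {u v : Fin n} {f : Finset (Fin n)} :
    f ∈ transfer E u v ↔
      (f ∈ E ∧ v ∉ f) ∨ ∃ e, e ∈ E ∧ u ∈ e ∧ v ∉ e ∧ f = insert v (e.erase u) := by
  simp only [transfer, Finset.mem_union, Finset.mem_filter, Finset.mem_image]
  constructor
  · rintro (⟨h1, h2⟩ | ⟨e, ⟨he, hu, hv⟩, hf⟩)
    · exact Or.inl ⟨h1, h2⟩
    · exact Or.inr ⟨e, he, hu, hv, hf.symm⟩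
  · rintro (⟨h1, h2⟩ | ⟨e, he, hu, hv, hf⟩)
    · exact Or.inl ⟨h1, h2⟩
    · exact Or.inr ⟨e, ⟨he, hu, hv⟩, hf.symm⟩

lemma mem_tilde {u v : Fin n} (huv : u ≠ v) {e : Finset (Fin n)} (hv : v ∉ e) {x : Fin n} :
    x ∈ insert v (e.erase u) ↔ x = v ∨ (x ∈ e ∧ x ≠ u) := by
  simp only [Finset.mem_insert, Finset.mem_erase]
  tauto

lemma tilde_inj {u v : Fin n} (huv : u ≠ v) {e f : Finset (Fin n)}
    (hue : u ∈ e) (hve : v ∉ e) (huf : u ∈ f) (hvf : v ∉ f)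
    (h : insert v (e.erase u) = insert v (f.erase u)) : e = f := by
  have h1 : e.erase u = f.erase u := by
    have hve' : v ∉ e.erase u := fun hh => hve (Finset.mem_of_mem_erase hh)
    have hvf' : v ∉ f.erase u := fun hh => hvf (Finset.mem_of_mem_erase hh)
    have := congrArg (fun s => Finset.erase s v) h
    simpa [Finset.erase_insert hve', Finset.erase_insert hvf'] using this
  have := congrArg (fun s => insert u s) h1
  simpa [Finset.insert_erase hue, Finset.insert_erase huf] using this

lemma eq_of_symmDiff_subset_left {B C : Finset (Fin n)} (h : symmDiff B C ⊆ B)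
    (hcard : B.card ≤ C.card) : B = C := by
  have hCB : C ⊆ B := by
    intro x hx
    by_cases hxB : x ∈ B
    · exact hxB
    · exact h (Finset.mem_symmDiff.mpr (Or.inr ⟨hx, hxB⟩))
  exact (Finset.eq_of_subset_of_card_le hCB hcard).symm

lemma eq_of_symmDiff_subset_right {B C : Finset (Fin n)} (h : symmDiff B C ⊆ C)
    (hcard : C.card ≤ B.card) : B = C := by
  rw [symmDiff_comm] at h
  exact (eq_of_symmDiff_subset_left h hcard).symm

lemma transfer_threeGraph {E : Finset (Finset (Fin n))} (hE : IsThreeGraph E) {u v : Fin n} :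
    IsThreeGraph (transfer E u v) := by
  intro f hf
  rcases mem_transfer.mp hf with ⟨h1, _⟩ | ⟨e, he, hu, hv, hf⟩
  · exact hE f h1
  · have hve : v ∉ e.erase u := fun hh => hv (Finset.mem_of_mem_erase hh)
    rw [hf, Finset.card_insert_of_notMem hve, Finset.card_erase_of_mem hu, hE e he]

/-- the mixed case of the cancellativity of the transfer -/
lemma transfer_cancel_aux {E : Finset (Finset (Fin n))} (hE : IsThreeGraph E)
    (hc : Cancellative E) {u v : Fin n} (huv : u ≠ v)
    {A B C b : Finset (Fin n)}
    (hA : A ∈ transfer E u v)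
    (hbE : b ∈ E) (hub : u ∈ b) (hvb : v ∉ b) (hBdef : B = insert v (b.erase u))
    (hCE : C ∈ E) (hvC : v ∉ C)
    (hAB : A ≠ B) (hAC : A ≠ C) (hBC : B ≠ C)
    (h : symmDiff B C ⊆ A) : False := by
  have hvB : v ∈ B := by rw [hBdef]; exact Finset.mem_insert_self _ _
  have hvA : v ∈ A := h (Finset.mem_symmDiff.mpr (Or.inl ⟨hvB, hvC⟩))
  rcases mem_transfer.mp hA with ⟨_, hvA'⟩ | ⟨a, haE, hua, hva, hAdef⟩
  · exact hvA' hvA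
  have huA : u ∉ A := by
    rw [hAdef, mem_tilde huv hva]
    rintro (h1 | ⟨_, h2⟩)
    · exact huv h1
    · exact h2 rfl
  by_cases hbC : b = C
  · -- symmDiff B C = {u, v}, so u ∈ A, contradiction
    have huB : u ∉ B := by
      rw [hBdef, mem_tilde huv hvb]
      rintro (h1 | ⟨_, h2⟩)
      · exact huv h1
      · exact h2 rfl
    have huC : u ∈ C := hbC ▸ hub
    exact huA (h (Finset.mem_symmDiff.mpr (Or.inr ⟨huC, huB⟩)))
  · have hsub : symmDiff b C ⊆ a := by
      intro x hx
      rcases Finset.mem_symmDiff.mp hx with ⟨hxb, hxC⟩ | ⟨hxC, hxb⟩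
      · by_cases hxu : x = u
        · exact hxu ▸ hua
        · have hxv : x ≠ v := fun hh => hvb (hh ▸ hxb)
          have hxB : x ∈ B := by rw [hBdef, mem_tilde huv hvb]; exact Or.inr ⟨hxb, hxu⟩
          have hxA : x ∈ A := h (Finset.mem_symmDiff.mpr (Or.inl ⟨hxB, hxC⟩))
          rw [hAdef, mem_tilde huv hva] at hxA
          rcases hxA with h1 | ⟨h2, _⟩
          · exact absurd h1 hxv
          · exact h2
      · have hxv : x ≠ v := fun hh => hvC (hh ▸ hxC)
        have hxB : x ∉ B := by
          rw [hBdef, mem_tilde huv hvb]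
          rintro (h1 | ⟨h2, _⟩)
          · exact hxv h1
          · exact hxb h2
        have hxA : x ∈ A := h (Finset.mem_symmDiff.mpr (Or.inr ⟨hxC, hxB⟩))
        rw [hAdef, mem_tilde huv hva] at hxA
        rcases hxA with h1 | ⟨h2, _⟩
        · exact absurd h1 hxv
        · exact h2
    have hab : a ≠ b := fun hh => hAB (by rw [hAdef, hBdef, hh])
    by_cases haC : a = C
    · rw [haC] at hsub
      exact hbC (eq_of_symmDiff_subset_right hsub
        (by rw [hE C hCE, hE b hbE]))
    · exact hc a haE b hbE C hCE hab haC hbC hsub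

end Transfer

lemma transfer_cancellative {E : Finset (Finset (Fin n))} (hE : IsThreeGraph E)
    (hc : Cancellative E) {u v : Fin n} (huv : u ≠ v) :
    Cancellative (transfer E u v) := by
  intro A hA B hB C hC hAB hAC hBC h
  rcases mem_transfer.mp hB with ⟨hBE, hvB⟩ | ⟨b, hbE, hub, hvb, hBdef⟩
  · rcases mem_transfer.mp hC with ⟨hCE, hvC⟩ | ⟨c, hcE, huc, hvc, hCdef⟩
    · -- case 1 : B, C ∈ E₀
      rcases mem_transfer.mp hA with ⟨hAE, hvA⟩ | ⟨a, haE, hua, hva, hAdef⟩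
      · exact hc A hAE B hBE C hCE hAB hAC hBC h
      · have hsub : symmDiff B C ⊆ a := by
          intro x hx
          have hxv : x ≠ v := by
            rintro rfl
            rcases Finset.mem_symmDiff.mp hx with ⟨h1, _⟩ | ⟨h1, _⟩
            · exact hvB h1
            · exact hvC h1
          have hxA := h hx
          rw [hAdef, mem_tilde huv hva] at hxA
          rcases hxA with h1 | ⟨h2, _⟩
          · exact absurd h1 hxv
          · exact h2
        have haB : a ≠ B := by
          intro hh; rw [hh] at hsub
          exact hBC (eq_of_symmDiff_subset_left hsub (by rw [hE B hBE, hE C hCE]))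
        have haC : a ≠ C := by
          intro hh; rw [hh] at hsub
          exact hBC (eq_of_symmDiff_subset_right hsub (by rw [hE B hBE, hE C hCE]))
        exact hc a haE B hBE C hCE haB haC hBC hsub
    · -- case 3 : B ∈ E₀, C = ṽ(c) : symmetric to the mixed case
      rw [symmDiff_comm] at h
      exact transfer_cancel_aux hE hc huv hA hcE huc hvc hCdef hBE hvB hAC hAB hBC.symm h
  · rcases mem_transfer.mp hC with ⟨hCE, hvC⟩ | ⟨c, hcE, huc, hvc, hCdef⟩
    · -- case 2 : B = ṽ(b), C ∈ E₀
      exact transfer_cancel_aux hE hc huv hA hbE hub hvb hBdef hCE hvC hAB hAC hBC h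
    · -- case 4 : B = ṽ(b), C = ṽ(c)
      have hbc : b ≠ c := fun hh => hBC (by rw [hBdef, hCdef, hh])
      have hsubA : symmDiff b c ⊆ A := by
        intro x hx
        rcases Finset.mem_symmDiff.mp hx with ⟨hxb, hxc⟩ | ⟨hxc, hxb⟩
        · have hxu : x ≠ u := fun hh => hxc (hh ▸ huc)
          have hxv : x ≠ v := fun hh => hvb (hh ▸ hxb)
          have hxB : x ∈ B := by rw [hBdef, mem_tilde huv hvb]; exact Or.inr ⟨hxb, hxu⟩
          have hxC : x ∉ C := by
            rw [hCdef, mem_tilde huv hvc]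
            rintro (h1 | ⟨h2, _⟩)
            · exact hxv h1
            · exact hxc h2
          exact h (Finset.mem_symmDiff.mpr (Or.inl ⟨hxB, hxC⟩))
        · have hxu : x ≠ u := fun hh => hxb (hh ▸ hub)
          have hxv : x ≠ v := fun hh => hvc (hh ▸ hxc)
          have hxC : x ∈ C := by rw [hCdef, mem_tilde huv hvc]; exact Or.inr ⟨hxc, hxu⟩
          have hxB : x ∉ B := by
            rw [hBdef, mem_tilde huv hvb]
            rintro (h1 | ⟨h2, _⟩)
            · exact hxv h1
            · exact hxb h2
          exact h (Finset.mem_symmDiff.mpr (Or.inr ⟨hxC, hxB⟩))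
      have hvbc : v ∉ symmDiff b c := by
        intro hh
        rcases Finset.mem_symmDiff.mp hh with ⟨h1, _⟩ | ⟨h1, _⟩
        · exact hvb h1
        · exact hvc h1
      rcases mem_transfer.mp hA with ⟨hAE, hvA⟩ | ⟨a, haE, hua, hva, hAdef⟩
      · have hAb : A ≠ b := by
          intro hh; rw [hh] at hsubA
          exact hbc (eq_of_symmDiff_subset_left hsubA (by rw [hE b hbE, hE c hcE]))
        have hAc : A ≠ c := by
          intro hh; rw [hh] at hsubA
          exact hbc (eq_of_symmDiff_subset_right hsubA (by rw [hE b hbE, hE c hcE]))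
        exact hc A hAE b hbE c hcE hAb hAc hbc hsubA
      · have hsub : symmDiff b c ⊆ a := by
          intro x hx
          have hxv : x ≠ v := fun hh => hvbc (hh ▸ hx)
          have hxA := hsubA hx
          rw [hAdef, mem_tilde huv hva] at hxA
          rcases hxA with h1 | ⟨h2, _⟩
          · exact absurd h1 hxv
          · exact h2
        have hab : a ≠ b := fun hh => hAB (by rw [hAdef, hBdef, hh])
        have hac : a ≠ c := fun hh => hAC (by rw [hAdef, hCdef, hh])
        exact hc a haE b hbE c hcE hab hac hbc hsub


section Supp
variable {n : ℕ}

lemma polyForm_transfer (E : Finset (Finset (Fin n))) {u v : Fin n} (huv : u ≠ v)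
    (y : Fin n → ℝ) :
    polyForm (transfer E u v) y
      = 3 * ((∑ e ∈ E.filter (fun e => v ∉ e), ∏ i ∈ e, y i)
        + y v * ∑ e ∈ E.filter (fun e => u ∈ e ∧ v ∉ e), ∏ i ∈ e.erase u, y i) := by
  rw [polyForm, transfer]
  have hdisj : Disjoint (E.filter fun e => v ∉ e)
      ((E.filter fun e => u ∈ e ∧ v ∉ e).image fun e => insert v (e.erase u)) := by
    rw [Finset.disjoint_left]
    intro f hf hf'
    obtain ⟨e, _, hfe⟩ := Finset.mem_image.mp hf'
    have : v ∈ f := hfe ▸ Finset.mem_insert_self v _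
    exact (Finset.mem_filter.mp hf).2 this
  rw [Finset.sum_union hdisj]
  have hinj : ∀ e ∈ E.filter (fun e => u ∈ e ∧ v ∉ e),
      ∀ f ∈ E.filter (fun e => u ∈ e ∧ v ∉ e),
      insert v (e.erase u) = insert v (f.erase u) → e = f := fun e he f hf hef =>
    tilde_inj huv (Finset.mem_filter.mp he).2.1 (Finset.mem_filter.mp he).2.2
      (Finset.mem_filter.mp hf).2.1 (Finset.mem_filter.mp hf).2.2 hef
  have himg : ∑ f ∈ (E.filter (fun e => u ∈ e ∧ v ∉ e)).image (fun e => insert v (e.erase u)),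
      ∏ i ∈ f, y i = ∑ e ∈ E.filter (fun e => u ∈ e ∧ v ∉ e), ∏ i ∈ insert v (e.erase u), y i :=
    by exact Finset.sum_image hinj
  rw [himg]
  have hterm : ∀ e ∈ E.filter (fun e => u ∈ e ∧ v ∉ e),
      ∏ i ∈ insert v (e.erase u), y i = y v * ∏ i ∈ e.erase u, y i := by
    intro e he
    have hv : v ∉ e.erase u := fun hh =>
      (Finset.mem_filter.mp he).2.2 (Finset.mem_of_mem_erase hh)
    rw [Finset.prod_insert hv]
  rw [Finset.sum_congr rfl hterm, ← Finset.mul_sum]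

lemma degree_eq_filter_card (E : Finset (Finset (Fin n))) (v : Fin n) :
    degree E v = (E.filter fun e => v ∈ e).card := by
  rw [degree, link]
  apply Finset.card_image_of_injOn
  intro e he f hf hef
  have hve : v ∈ e := (Finset.mem_filter.mp (Finset.mem_coe.mp he)).2
  have hvf : v ∈ f := (Finset.mem_filter.mp (Finset.mem_coe.mp hf)).2
  have hef' : e.erase v = f.erase v := hef
  rw [← Finset.insert_erase hve, hef', Finset.insert_erase hvf]

lemma W_le_bound {E : Finset (Finset (Fin n))} (hE : IsThreeGraph E) (v : Fin n)
    {x : Fin n → ℝ} (hx0 : ∀ i, 0 ≤ x i) {M : ℝ}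
    (hM : ∀ e ∈ E, v ∈ e → ∏ i ∈ e.erase v, x i ≤ M) :
    ∑ e ∈ E.filter (fun e => v ∈ e), ∏ i ∈ e.erase v, x i ≤ (degree E v : ℝ) * M := by
  rw [degree_eq_filter_card]
  calc ∑ e ∈ E.filter (fun e => v ∈ e), ∏ i ∈ e.erase v, x i
      ≤ ∑ e ∈ E.filter (fun e => v ∈ e), M := by
        refine Finset.sum_le_sum fun e he => ?_
        exact hM e (Finset.mem_filter.mp he).1 (Finset.mem_filter.mp he).2
    _ = ((E.filter fun e => v ∈ e).card : ℝ) * M := by rw [Finset.sum_const, nsmul_eq_mul]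

lemma prod_erase_le_sq {E : Finset (Finset (Fin n))} (hE : IsThreeGraph E)
    {x : Fin n → ℝ} (hx0 : ∀ i, 0 ≤ x i) {u₁ : Fin n} (hu₁ : ∀ i, x i ≤ x u₁)
    {v : Fin n} {e : Finset (Fin n)} (he : e ∈ E) (hv : v ∈ e) :
    ∏ i ∈ e.erase v, x i ≤ (x u₁) ^ 2 := by
  have hcard : (e.erase v).card = 2 := by
    rw [Finset.card_erase_of_mem hv, hE e he]
  calc ∏ i ∈ e.erase v, x i ≤ ∏ i ∈ e.erase v, x u₁ :=
        Finset.prod_le_prod (fun i _ => hx0 i) (fun i _ => hu₁ i)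
    _ = (x u₁) ^ 2 := by rw [Finset.prod_const, hcard]

end Supp


set_option maxHeartbeats 1600000 in
/-- Degree bounds for a 3-spectral-extremal cancellative 3-graph `G*` in which
non-adjacent vertices have equal links. Here `x` is a nonnegative unit eigenvector to
`λ^(3)(G*)`, `u₁` has maximum `x`-value, and `u₂` has maximum `x`-value among the
neighbors of `u₁`. -/
theorem degree_bounds {n : ℕ} (E : Finset (Finset (Fin n))) (hmax : MaxSpectral 3 E)
    (hlink : ∀ u v : Fin n, ¬ Adjacent E u v → link E u = link E v)
    (x : Fin n → ℝ) (hx0 : ∀ i, 0 ≤ x i) (hxn : pNorm 3 x = 1)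
    (hxe : polyForm E x = specRad 3 E)
    (u₁ u₂ : Fin n) (hu₁ : ∀ i, x i ≤ x u₁)
    (hu₂adj : Adjacent E u₁ u₂) (hu₂max : ∀ w : Fin n, Adjacent E u₁ w → x w ≤ x u₂) :
    (n : ℝ) * ((n : ℝ) - 1) / 9 < (degree E u₁ : ℝ) ∧
    (n : ℝ) * ((n : ℝ) - 1) / 12 < (degree E u₂ : ℝ) ∧
    ∀ v : Fin n, (n : ℝ) * ((n : ℝ) - 1) / 16 < (degree E v : ℝ) := by
  obtain ⟨hE3, hcanc, hspecmax⟩ := hmax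
  obtain ⟨hu12, e0, he0E, hu1e0, hu2e0⟩ := hu₂adj
  have hn3 : 3 ≤ n := by
    have h1 : e0.card = 3 := hE3 e0 he0E
    have h2 : e0.card ≤ n := by simpa using Finset.card_le_univ e0
    omega
  have hopt : ∀ z : Fin n → ℝ, pNorm 3 z = 1 → polyForm E z ≤ polyForm E x := by
    intro z hz
    rw [hxe]
    exact le_specRad E hz
  set lam := specRad 3 E with hlamdef
  have hlam9 : (n : ℝ) * ((n : ℝ) - 1) / 9 < lam :=
    lt_of_lt_of_le (T3_specRad_lower hn3) (hspecmax (T3 n) T3_threeGraph T3_cancellative)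
  have hnR : (3:ℝ) ≤ (n:ℝ) := by exact_mod_cast hn3
  have hlampos : 0 < lam := lt_of_le_of_lt (by nlinarith : (0:ℝ) ≤ (n : ℝ) * ((n : ℝ) - 1) / 9) hlam9
  have hsum : ∑ i, (x i)^3 = 1 := sum_cube_eq_one hx0 hxn
  have hxu1pos : 0 < x u₁ := by
    by_contra hle
    push_neg at hle
    have hz : ∀ i : Fin n, (x i)^3 = 0 := fun i => by
      have : x i = 0 := le_antisymm (le_trans (hu₁ i) hle) (hx0 i)
      rw [this]; ring
    rw [Finset.sum_congr rfl (fun i _ => hz i)] at hsum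
    simp at hsum
  have hxu1lt1 : x u₁ < 1 := by
    by_contra hge
    push_neg at hge
    have h13 : 1 ≤ (x u₁)^3 := by nlinarith [mul_le_mul hge hge (by norm_num : (0:ℝ) ≤ 1) (hx0 u₁)]
    have hsplit1 : (∑ i ∈ Finset.univ.erase u₁, (x i)^3) + (x u₁)^3 = 1 := by
      simpa using (Finset.sum_erase_add Finset.univ (fun i => (x i)^3) (mem_univ u₁)).trans hsum
    have hrest_ge : 0 ≤ ∑ i ∈ Finset.univ.erase u₁, (x i)^3 :=
      Finset.sum_nonneg fun i _ => pow_nonneg (hx0 i) 3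
    have hall0 : ∀ i ∈ Finset.univ.erase u₁, (x i)^3 = 0 :=
      (Finset.sum_eq_zero_iff_of_nonneg (fun i _ => pow_nonneg (hx0 i) 3)).mp
        (le_antisymm (by linarith) hrest_ge)
    have hx_zero : ∀ i : Fin n, i ≠ u₁ → x i = 0 := fun i hi =>
      (pow_eq_zero_iff (by norm_num : 3 ≠ 0)).mp
        (hall0 i (Finset.mem_erase.mpr ⟨hi, mem_univ i⟩))
    have hpf : polyForm E x = 0 := by
      rw [polyForm]
      have hz : ∀ e ∈ E, ∏ i ∈ e, x i = 0 := by
        intro e heE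
        have hcard : 2 ≤ (e.erase u₁).card := by
          have := Finset.pred_card_le_card_erase (a := u₁) (s := e)
          rw [hE3 e heE] at this
          omega
        obtain ⟨i, hi⟩ := Finset.card_pos.mp (lt_of_lt_of_le (by norm_num) hcard)
        exact Finset.prod_eq_zero (Finset.mem_of_mem_erase hi)
          (hx_zero i (Finset.ne_of_mem_erase hi))
      rw [Finset.sum_congr rfl hz]; simp
    rw [hxe] at hpf
    linarith
  -- eigen equations
  have heig : ∀ v : Fin n, 0 < x v →
      (∑ e ∈ E.filter (fun e => v ∈ e), ∏ i ∈ e.erase v, x i) = lam * (x v)^2 := by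
    intro v hv
    have := eigen_eq hE3 hx0 hxn hopt hv (lt_of_le_of_lt (hu₁ v) hxu1lt1)
    rw [this, hxe]
  have hWnn : ∀ v : Fin n, 0 ≤ ∑ e ∈ E.filter (fun e => v ∈ e), ∏ i ∈ e.erase v, x i :=
    fun v => Finset.sum_nonneg fun e _ => Finset.prod_nonneg fun i _ => hx0 i
  have hsplitlam : ∀ v : Fin n, lam = 3 * ((∑ e ∈ E.filter (fun e => v ∉ e), ∏ i ∈ e, x i)
      + x v * ∑ e ∈ E.filter (fun e => v ∈ e), ∏ i ∈ e.erase v, x i) := by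
    intro v
    rw [← hxe, polyForm, poly_split E v x]
  have htrans_le : ∀ v : Fin n, v ≠ u₁ → ∀ y : Fin n → ℝ, (∀ i, 0 ≤ y i) →
      polyForm (transfer E u₁ v) y ≤ lam * (∑ i, (y i)^3) := by
    intro v hv y hy
    have h3 := transfer_threeGraph hE3 (u := u₁) (v := v)
    have hcc := transfer_cancellative hE3 hcanc (Ne.symm hv)
    have hb := polyForm_le_spec h3 y hy
    have hs := hspecmax _ h3 hcc
    have hm0 : 0 ≤ ∑ i, (y i)^3 := Finset.sum_nonneg fun i _ => pow_nonneg (hy i) 3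
    calc polyForm (transfer E u₁ v) y ≤ specRad 3 (transfer E u₁ v) * (∑ i, (y i)^3) := hb
      _ ≤ lam * (∑ i, (y i)^3) := mul_le_mul_of_nonneg_right hs hm0
  -- decomposition of the u₁-sum at a vertex v
  have hWhat : ∀ v : Fin n,
      (∑ e ∈ E.filter (fun e => u₁ ∈ e ∧ v ∉ e), ∏ i ∈ e.erase u₁, x i)
        = (∑ e ∈ E.filter (fun e => u₁ ∈ e), ∏ i ∈ e.erase u₁, x i)
          - ∑ e ∈ E.filter (fun e => u₁ ∈ e ∧ v ∈ e), ∏ i ∈ e.erase u₁, x i := by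
    intro v
    have hff1 : (E.filter (fun e => u₁ ∈ e)).filter (fun e => v ∈ e)
        = E.filter (fun e => u₁ ∈ e ∧ v ∈ e) := by rw [Finset.filter_filter]
    have hff2 : (E.filter (fun e => u₁ ∈ e)).filter (fun e => ¬ v ∈ e)
        = E.filter (fun e => u₁ ∈ e ∧ v ∉ e) := by rw [Finset.filter_filter]
    have hh := Finset.sum_filter_add_sum_filter_not (E.filter (fun e => u₁ ∈ e))
      (fun e => v ∈ e) (fun e => ∏ i ∈ e.erase u₁, x i)
    rw [hff1, hff2] at hh
    linarith
  -- positivity of all coordinates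
  have hpos : ∀ v : Fin n, 0 < x v := by
    intro v
    rcases lt_or_eq_of_le (hx0 v) with h | h
    · exact h
    have hxv0 : x v = 0 := h.symm
    exfalso
    have hvne : v ≠ u₁ := fun hh => by rw [hh] at hxv0; linarith
    set y : Fin n → ℝ := fun i => if i = v then x u₁ else x i with hydef
    have hy0 : ∀ i, 0 ≤ y i := fun i => by
      rw [hydef]; dsimp only; split <;> [exact hxu1pos.le; exact hx0 i]
    have hsumy : ∑ i, (y i)^3 = 1 + (x u₁)^3 := by
      rw [← Finset.sum_erase_add Finset.univ _ (mem_univ v)]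
      have hyv : y v = x u₁ := by rw [hydef]; simp
      have hagree : ∀ i ∈ Finset.univ.erase v, (y i)^3 = (x i)^3 := by
        intro i hi
        have : i ≠ v := Finset.ne_of_mem_erase hi
        rw [hydef]; simp [this]
      rw [Finset.sum_congr rfl hagree, hyv]
      have h2 : (∑ i ∈ Finset.univ.erase v, (x i)^3) + (x v)^3 = 1 := by
        simpa using (Finset.sum_erase_add Finset.univ (fun i => (x i)^3) (mem_univ v)).trans hsum
      have h3 : (∑ i ∈ Finset.univ.erase v, (x i)^3) = 1 := by
        rw [hxv0] at h2; linarith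
      rw [h3]
    have hptr := polyForm_transfer E (Ne.symm hvne) y
    have hA : ∑ e ∈ E.filter (fun e => v ∉ e), ∏ i ∈ e, y i
        = ∑ e ∈ E.filter (fun e => v ∉ e), ∏ i ∈ e, x i := by
      refine Finset.sum_congr rfl fun e he => Finset.prod_congr rfl fun i hi => ?_
      have : i ≠ v := fun hh => (Finset.mem_filter.mp he).2 (hh ▸ hi)
      rw [hydef]; simp [this]
    have hB : ∑ e ∈ E.filter (fun e => u₁ ∈ e ∧ v ∉ e), ∏ i ∈ e.erase u₁, y i
        = ∑ e ∈ E.filter (fun e => u₁ ∈ e ∧ v ∉ e), ∏ i ∈ e.erase u₁, x i := by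
      refine Finset.sum_congr rfl fun e he => Finset.prod_congr rfl fun i hi => ?_
      have : i ≠ v := fun hh => (Finset.mem_filter.mp he).2.2 (hh ▸ Finset.mem_of_mem_erase hi)
      rw [hydef]; simp [this]
    have hyv : y v = x u₁ := by rw [hydef]; simp
    -- T v = 0
    have hT0 : ∑ e ∈ E.filter (fun e => u₁ ∈ e ∧ v ∈ e), ∏ i ∈ e.erase u₁, x i = 0 := by
      refine Finset.sum_eq_zero fun e he => ?_
      have hve : v ∈ e.erase u₁ :=
        Finset.mem_erase.mpr ⟨hvne, (Finset.mem_filter.mp he).2.2⟩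
      exact Finset.prod_eq_zero hve hxv0
    have hS0 : ∑ e ∈ E.filter (fun e => v ∉ e), ∏ i ∈ e, x i = lam / 3 := by
      have := hsplitlam v
      rw [hxv0] at this
      linarith
    have hWu1 : (∑ e ∈ E.filter (fun e => u₁ ∈ e), ∏ i ∈ e.erase u₁, x i)
        = lam * (x u₁)^2 := heig u₁ hxu1pos
    have hfinal := htrans_le v hvne y hy0
    rw [hptr, hA, hB, hyv, hWhat v, hT0, hWu1, hS0, hsumy] at hfinal
    nlinarith [pow_pos hxu1pos 3]
  -- ratio bound
  have hratio : ∀ v : Fin n, v ≠ u₁ → (x u₁)^3 ≤ (x v)^2 * x u₁ + (x v)^3 := by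
    intro v hv
    have h1 := htrans_le v hv x hx0
    rw [hsum, mul_one, polyForm_transfer E (Ne.symm hv) x] at h1
    have h2 := hsplitlam v
    rw [hWhat v] at h1
    -- h1 : 3 * (S₀ + x v * (Wu₁ - T)) ≤ lam ; h2 : lam = 3 * (S₀ + x v * W v)
    have hxvpos := hpos v
    have h3 : x v * ((∑ e ∈ E.filter (fun e => u₁ ∈ e), ∏ i ∈ e.erase u₁, x i)
          - ∑ e ∈ E.filter (fun e => u₁ ∈ e ∧ v ∈ e), ∏ i ∈ e.erase u₁, x i)
        ≤ x v * ∑ e ∈ E.filter (fun e => v ∈ e), ∏ i ∈ e.erase v, x i := by linarith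
    have h4 : (∑ e ∈ E.filter (fun e => u₁ ∈ e), ∏ i ∈ e.erase u₁, x i)
          - (∑ e ∈ E.filter (fun e => u₁ ∈ e ∧ v ∈ e), ∏ i ∈ e.erase u₁, x i)
        ≤ ∑ e ∈ E.filter (fun e => v ∈ e), ∏ i ∈ e.erase v, x i :=
      le_of_mul_le_mul_left h3 hxvpos
    -- x u₁ * T = x v * T'
    have hTT' : x u₁ * ∑ e ∈ E.filter (fun e => u₁ ∈ e ∧ v ∈ e), ∏ i ∈ e.erase u₁, x i
        = x v * ∑ e ∈ E.filter (fun e => u₁ ∈ e ∧ v ∈ e), ∏ i ∈ e.erase v, x i := by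
      rw [Finset.mul_sum, Finset.mul_sum]
      refine Finset.sum_congr rfl fun e he => ?_
      have hm := Finset.mem_filter.mp he
      have hu1e := hm.2.1
      have hve := hm.2.2
      have hveu : v ∈ e.erase u₁ := Finset.mem_erase.mpr ⟨hv, hve⟩
      have huev : u₁ ∈ e.erase v := Finset.mem_erase.mpr ⟨Ne.symm hv, hu1e⟩
      rw [← Finset.mul_prod_erase (e.erase u₁) x hveu,
        ← Finset.mul_prod_erase (e.erase v) x huev, Finset.erase_right_comm]
      ring
    -- T' ≤ W v
    have hT'W : (∑ e ∈ E.filter (fun e => u₁ ∈ e ∧ v ∈ e), ∏ i ∈ e.erase v, x i)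
        ≤ ∑ e ∈ E.filter (fun e => v ∈ e), ∏ i ∈ e.erase v, x i := by
      apply Finset.sum_le_sum_of_subset_of_nonneg
      · intro e he
        have hm := Finset.mem_filter.mp he
        exact Finset.mem_filter.mpr ⟨hm.1, hm.2.2⟩
      · intro e _ _
        exact Finset.prod_nonneg fun i _ => hx0 i
    have h5 : x u₁ * ((∑ e ∈ E.filter (fun e => u₁ ∈ e), ∏ i ∈ e.erase u₁, x i)
          - ∑ e ∈ E.filter (fun e => v ∈ e), ∏ i ∈ e.erase v, x i)
        ≤ x v * ∑ e ∈ E.filter (fun e => v ∈ e), ∏ i ∈ e.erase v, x i := by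
      calc x u₁ * ((∑ e ∈ E.filter (fun e => u₁ ∈ e), ∏ i ∈ e.erase u₁, x i)
            - ∑ e ∈ E.filter (fun e => v ∈ e), ∏ i ∈ e.erase v, x i)
          ≤ x u₁ * ∑ e ∈ E.filter (fun e => u₁ ∈ e ∧ v ∈ e), ∏ i ∈ e.erase u₁, x i :=
            mul_le_mul_of_nonneg_left (by linarith) hxu1pos.le
        _ = x v * ∑ e ∈ E.filter (fun e => u₁ ∈ e ∧ v ∈ e), ∏ i ∈ e.erase v, x i := hTT'
        _ ≤ x v * ∑ e ∈ E.filter (fun e => v ∈ e), ∏ i ∈ e.erase v, x i :=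
            mul_le_mul_of_nonneg_left hT'W hxvpos.le
    rw [heig v hxvpos, heig u₁ hxu1pos] at h5
    nlinarith [h5, hlampos]
  -- the 3/4 bound
  have hr34 : ∀ v : Fin n, v ≠ u₁ → 3/4 * x u₁ < x v := by
    intro v hv
    by_contra hcon
    push_neg at hcon
    have hq := hratio v hv
    have hb2 : (x v)^2 ≤ (3/4 * x u₁)^2 := by nlinarith [hx0 v]
    have hb3 : (x v)^3 ≤ (3/4 * x u₁)^3 := by nlinarith [hx0 v]
    nlinarith [pow_pos hxu1pos 3, mul_le_mul_of_nonneg_right hb2 hxu1pos.le]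
  -- degree bounds
  have hdeg : ∀ v : Fin n, (∑ e ∈ E.filter (fun e => v ∈ e), ∏ i ∈ e.erase v, x i)
      ≤ (degree E v : ℝ) * (x u₁)^2 := fun v =>
    W_le_bound hE3 v hx0 (fun e he hv => prod_erase_le_sq hE3 hx0 hu₁ he hv)
  have hxu1sq : 0 < (x u₁)^2 := pow_pos hxu1pos 2
  -- Goal 1
  have g1 : (n : ℝ) * ((n : ℝ) - 1) / 9 < (degree E u₁ : ℝ) := by
    have h := hdeg u₁
    rw [heig u₁ hxu1pos] at h
    have : lam ≤ (degree E u₁ : ℝ) := le_of_mul_le_mul_right (by linarith [h]) hxu1sq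
    linarith
  -- Goal 3
  have g3 : ∀ v : Fin n, (n : ℝ) * ((n : ℝ) - 1) / 16 < (degree E v : ℝ) := by
    intro v
    have hnn : 0 ≤ (n:ℝ) * ((n:ℝ) - 1) := by nlinarith
    rcases eq_or_ne v u₁ with rfl | hv
    · linarith
    · have h34 := hr34 v hv
      have h := hdeg v
      rw [heig v (hpos v)] at h
      have hxv2 : 9/16 * (x u₁)^2 < (x v)^2 := by nlinarith [hpos v, hxu1pos]
      have hp1 : 0 < lam * ((x v)^2 - 9/16 * (x u₁)^2) :=
        mul_pos hlampos (by linarith)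
      have hp2 : 0 < (lam - (n:ℝ) * ((n:ℝ) - 1) / 9) * (x u₁)^2 :=
        mul_pos (by linarith) hxu1sq
      have hstep : (n:ℝ) * ((n:ℝ) - 1) / 16 * (x u₁)^2 < (degree E v : ℝ) * (x u₁)^2 := by
        nlinarith [hp1, hp2, h]
      exact lt_of_mul_lt_mul_right hstep (by positivity)
  -- Goal 2 : the u₂ bound
  have hedge2 : ∀ e ∈ E, u₂ ∈ e → ∏ i ∈ e.erase u₂, x i ≤ x u₁ * x u₂ := by
    intro e heE hu2e
    have hcard : (e.erase u₂).card = 2 := by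
      rw [Finset.card_erase_of_mem hu2e, hE3 e heE]
    obtain ⟨j, k, hjk, hS⟩ := Finset.card_eq_two.mp hcard
    have hj' : j ∈ e.erase u₂ := by rw [hS]; exact Finset.mem_insert_self _ _
    have hk' : k ∈ e.erase u₂ := by
      rw [hS]; exact Finset.mem_insert_of_mem (Finset.mem_singleton_self k)
    have hje : j ∈ e := Finset.mem_of_mem_erase hj'
    have hju2 : j ≠ u₂ := Finset.ne_of_mem_erase hj'
    have hke : k ∈ e := Finset.mem_of_mem_erase hk'
    have hku2 : k ≠ u₂ := Finset.ne_of_mem_erase hk'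
    rw [hS, Finset.prod_pair hjk]
    have hkey : x j ≤ x u₂ ∨ x k ≤ x u₂ := by
      by_contra hcon
      push_neg at hcon
      obtain ⟨hj2, hk2⟩ := hcon
      have hnadj : ¬ Adjacent E u₁ j := fun hadj => absurd (hu₂max j hadj) (not_le.mpr hj2)
      have hlk := hlink u₁ j hnadj
      have hej : e.erase j = {u₂, k} := by
        have he' : e = insert u₂ {j, k} := by rw [← hS, Finset.insert_erase hu2e]
        ext yy
        simp only [he', Finset.mem_erase, Finset.mem_insert, Finset.mem_singleton]
        constructor
        · rintro ⟨hyj, (rfl | rfl | rfl)⟩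
          · exact Or.inl rfl
          · exact absurd rfl hyj
          · exact Or.inr rfl
        · rintro (rfl | rfl)
          · exact ⟨Ne.symm hju2, Or.inl rfl⟩
          · exact ⟨Ne.symm hjk, Or.inr (Or.inr rfl)⟩
      have hmem : ({u₂, k} : Finset (Fin n)) ∈ link E j := by
        rw [link]
        exact Finset.mem_image.mpr ⟨e, Finset.mem_filter.mpr ⟨heE, hje⟩, hej⟩
      rw [← hlk] at hmem
      rw [link] at hmem
      obtain ⟨f, hfmem, hferase⟩ := Finset.mem_image.mp hmem
      obtain ⟨hfE, hu1f⟩ := Finset.mem_filter.mp hfmem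
      have hkf : k ∈ f.erase u₁ := by
        rw [hferase]; exact Finset.mem_insert_of_mem (Finset.mem_singleton_self k)
      have hadj : Adjacent E u₁ k :=
        ⟨Ne.symm (Finset.ne_of_mem_erase hkf), f, hfE, hu1f, Finset.mem_of_mem_erase hkf⟩
      exact absurd (hu₂max k hadj) (not_le.mpr hk2)
    rcases hkey with hcase | hcase
    · calc x j * x k ≤ x u₂ * x u₁ := mul_le_mul hcase (hu₁ k) (hx0 k) (hx0 u₂)
        _ = x u₁ * x u₂ := mul_comm _ _
    · exact mul_le_mul (hu₁ j) hcase (hx0 k) (hx0 u₁)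
  have g2 : (n : ℝ) * ((n : ℝ) - 1) / 12 < (degree E u₂ : ℝ) := by
    have hW2 : (∑ e ∈ E.filter (fun e => u₂ ∈ e), ∏ i ∈ e.erase u₂, x i)
        ≤ (degree E u₂ : ℝ) * (x u₁ * x u₂) := W_le_bound hE3 u₂ hx0 hedge2
    rw [heig u₂ (hpos u₂)] at hW2
    have hu21 : u₂ ≠ u₁ := Ne.symm hu12
    have h34 := hr34 u₂ hu21
    have hu2pos := hpos u₂
    -- lam * x u₂ ≤ deg * x u₁
    have hdiv : lam * x u₂ ≤ (degree E u₂ : ℝ) * x u₁ := by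
      have hh : (lam * x u₂) * x u₂ ≤ ((degree E u₂ : ℝ) * x u₁) * x u₂ := by
        calc (lam * x u₂) * x u₂ = lam * (x u₂)^2 := by ring
          _ ≤ (degree E u₂ : ℝ) * (x u₁ * x u₂) := hW2
          _ = ((degree E u₂ : ℝ) * x u₁) * x u₂ := by ring
      exact le_of_mul_le_mul_right hh hu2pos
    have hp1 : 0 < lam * (x u₂ - 3/4 * x u₁) := mul_pos hlampos (by linarith)
    have hp2 : 0 < (lam - (n:ℝ) * ((n:ℝ) - 1) / 9) * x u₁ := mul_pos (by linarith) hxu1pos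
    have hstep : (n:ℝ) * ((n:ℝ) - 1) / 12 * x u₁ < (degree E u₂ : ℝ) * x u₁ := by
      nlinarith [hp1, hp2, hdiv]
    exact lt_of_mul_lt_mul_right hstep hxu1pos.le
  exact ⟨g1, g2, g3⟩
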